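/- Let m be a positive integer. The set of triples (a, b, d) with a*d = m, d > 0, 0 ≤ b < d (with no coprimality condition) decomposes as a disjoint union over positive integers l with l² dividing m of the sets { (l*a', l*b', l*d') : a'*d' = m/l², d' > 0, 0 ≤ b' < d', gcd(a', b', d') = 1 }. -/

import Mathlib

/-- The set R*_m of triples (a,b,d) with ad = m, d > 0, 0 ≤ b < d. -/
def RstarSet (m : ℤ) : Set (ℤ × ℤ × ℤ) :=
  {t | t.1 * t.2.2 = m ∧ 0 < t.2.2 ∧ 0 ≤ t.2.1 ∧ t.2.1 < t.2.2}

/-- The set R_m of primitive triples (a,b,d) with ad = m, d > 0, 0 ≤ b < d, gcd(a,b,d)=1. -/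
def RprimSet (m : ℤ) : Set (ℤ × ℤ × ℤ) :=
  {t | t.1 * t.2.2 = m ∧ 0 < t.2.2 ∧ 0 ≤ t.2.1 ∧ t.2.1 < t.2.2 ∧
    Int.gcd t.1 (Int.gcd t.2.1 t.2.2) = 1}

lemma gcd_mul_triple (l a b d : ℤ) :
    Int.gcd (l * a) (Int.gcd (l * b) (l * d)) = l.natAbs * Int.gcd a (Int.gcd b d) := by
  simp [Int.gcd, Int.natAbs_mul, Int.natAbs_abs, Nat.gcd_mul_left]

/-- R*_m is the disjoint union over l² ∣ m, l > 0, of l · R_{m/l²}. -/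
theorem Rstar_decomposition (m : ℤ) (hm : 0 < m) :
    (RstarSet m =
      ⋃ l ∈ {l : ℤ | 0 < l ∧ l ^ 2 ∣ m},
        (fun t : ℤ × ℤ × ℤ => (l * t.1, l * t.2.1, l * t.2.2)) '' RprimSet (m / l ^ 2)) ∧
    (∀ l l' : ℤ, 0 < l → l ^ 2 ∣ m → 0 < l' → l' ^ 2 ∣ m → l ≠ l' →
      Disjoint
        ((fun t : ℤ × ℤ × ℤ => (l * t.1, l * t.2.1, l * t.2.2)) '' RprimSet (m / l ^ 2))
        ((fun t : ℤ × ℤ × ℤ => (l' * t.1, l' * t.2.1, l' * t.2.2)) '' RprimSet (m / l' ^ 2))) := by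
  constructor
  · ext t
    obtain ⟨a, b, d⟩ := t
    simp only [RstarSet, RprimSet, Set.mem_setOf_eq, Set.mem_iUnion, Set.mem_image,
      Prod.mk.injEq, exists_prop]
    constructor
    · rintro ⟨had, hd, hb0, hbd⟩
      set G : ℕ := Int.gcd a (Int.gcd b d) with hG
      have hd0 : d ≠ 0 := hd.ne'
      have hGpos : 0 < G := Nat.pos_of_ne_zero (by simp [hG, Int.gcd_eq_zero_iff, hd0])
      set g : ℤ := (G : ℤ) with hg
      have hgpos : 0 < g := by rw [hg]; exact_mod_cast hGpos
      have hga : g ∣ a := Int.gcd_dvd_left _ _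
      have hgbd : g ∣ (Int.gcd b d : ℤ) := Int.gcd_dvd_right _ _
      have hgb : g ∣ b := hgbd.trans (Int.gcd_dvd_left _ _)
      have hgd : g ∣ d := hgbd.trans (Int.gcd_dvd_right _ _)
      obtain ⟨a', ha'⟩ := hga
      obtain ⟨b', hb'⟩ := hgb
      obtain ⟨d', hd'⟩ := hgd
      have hmeq : m = g ^ 2 * (a' * d') := by rw [← had, ha', hd']; ring
      have hg2 : (g : ℤ) ^ 2 ≠ 0 := pow_ne_zero _ hgpos.ne'
      have hdiv : m / g ^ 2 = a' * d' := by rw [hmeq, Int.mul_ediv_cancel_left _ hg2]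
      have hd'pos : 0 < d' := by
        by_contra h
        push_neg at h
        nlinarith [hd' ▸ hd]
      refine ⟨g, ⟨hgpos, ⟨a' * d', hmeq⟩⟩, (a', b', d'), ⟨hdiv.symm, hd'pos, ?_, ?_, ?_⟩,
        ha'.symm, hb'.symm, hd'.symm⟩
      · by_contra h
        push_neg at h
        nlinarith [hb' ▸ hb0]
      · have : g * b' < g * d' := by rw [← hb', ← hd']; exact hbd
        exact lt_of_mul_lt_mul_left this hgpos.le
      · have key := gcd_mul_triple g a' b' d'
        rw [← ha', ← hb', ← hd'] at key
        have hnat : g.natAbs = G := by simp [hg]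
        rw [hnat, ← hG] at key
        have : G * 1 = G * Int.gcd a' (Int.gcd b' d') := by rw [mul_one]; exact key
        exact (Nat.eq_of_mul_eq_mul_left hGpos this).symm
    · rintro ⟨l, ⟨hl, hl2⟩, ⟨a', b', d'⟩, ⟨had, hd', hb0, hbd, -⟩, ha, hb, hd⟩
      subst ha hb hd
      refine ⟨?_, mul_pos hl hd', mul_nonneg hl.le hb0, mul_lt_mul_of_pos_left hbd hl⟩
      have : l ^ 2 * (m / l ^ 2) = m := Int.mul_ediv_cancel' hl2
      calc l * a' * (l * d') = l ^ 2 * (a' * d') := by ring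
        _ = m := by rw [had, this]
  · intro l l' hl hl2 hl' hl2' hne
    rw [Set.disjoint_left]
    rintro x ⟨⟨a, b, d⟩, ⟨-, -, -, -, hg⟩, rfl⟩ ⟨⟨a', b', d'⟩, ⟨-, -, -, -, hg'⟩, heq⟩
    simp only [Prod.mk.injEq] at heq
    obtain ⟨h1, h2, h3⟩ := heq
    have k1 : Int.gcd (l * a) (Int.gcd (l * b) (l * d)) = l.natAbs := by
      rw [gcd_mul_triple, hg, mul_one]
    have k2 : Int.gcd (l' * a') (Int.gcd (l' * b') (l' * d')) = l'.natAbs := by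
      rw [gcd_mul_triple, hg', mul_one]
    rw [h1, h2, h3] at k2
    have : l.natAbs = l'.natAbs := k1.symm.trans k2
    have e1 : (l.natAbs : ℤ) = l := Int.natAbs_of_nonneg hl.le
    have e2 : (l'.natAbs : ℤ) = l' := Int.natAbs_of_nonneg hl'.le
    exact hne (by rw [← e1, ← e2, this])
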